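/- Let G = (V, E) be a finite simple graph and let M1, M2 be matchings of G with |M1| = |M2|. If every connected component of the graph (V, M1 △ M2) that contains at least one edge is a path, then dist(M1, M2) = |M1 △ M2|/2. -/

import Mathlib

open SimpleGraph

/-- A matching of `G`, given as a finite set of edges of `G`,
no two of which share an endpoint. -/
def IsMatchingSet {V : Type*} (G : SimpleGraph V) (M : Finset (Sym2 V)) : Prop :=
  (↑M ⊆ G.edgeSet) ∧ ∀ e ∈ M, ∀ f ∈ M, e ≠ f → ∀ v : V, v ∈ e → v ∉ f

/-- A reconfiguration sequence of matchings from `M` to `N` of length `ℓ`. -/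
def IsReconfSeq {V : Type*} [DecidableEq V] (G : SimpleGraph V) (M N : Finset (Sym2 V))
    (ℓ : ℕ) (seq : ℕ → Finset (Sym2 V)) : Prop :=
  seq 0 = M ∧ seq ℓ = N ∧ (∀ i ≤ ℓ, IsMatchingSet G (seq i)) ∧
    ∀ i < ℓ, (symmDiff (seq i) (seq (i + 1))).card = 2

/-- The distance between two matchings: the least length of a reconfiguration
sequence between them, `⊤` if none exists. -/
noncomputable def reconfDist {V : Type*} [DecidableEq V] (G : SimpleGraph V)
    (M N : Finset (Sym2 V)) : ℕ∞ :=
  sInf {d : ℕ∞ | ∃ ℓ : ℕ, d = ℓ ∧ ∃ seq, IsReconfSeq G M N ℓ seq}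

/-- The graph `(V, M △ N)` on the symmetric difference of two edge sets. -/
def sdGraph {V : Type*} [DecidableEq V] (M N : Finset (Sym2 V)) : SimpleGraph V :=
  SimpleGraph.fromEdgeSet ↑(symmDiff M N)

/-- The connected component `K` of `H` contains at least one edge. -/
def CompHasEdge {V : Type*} (H : SimpleGraph V) (K : H.ConnectedComponent) : Prop :=
  ∃ v w : V, H.Adj v w ∧ H.connectedComponentMk v = K

/-- The connected component `K` of `H` is a path: some path of `H` visits exactly
the vertices of `K` and uses exactly the edges of `H` inside `K`. -/
def CompIsPath {V : Type*} (H : SimpleGraph V) (K : H.ConnectedComponent) : Prop :=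
  ∃ (a b : V) (p : H.Walk a b), p.IsPath ∧
    (∀ v : V, H.connectedComponentMk v = K → v ∈ p.support) ∧
    (∀ e ∈ H.edgeSet, (∃ v, v ∈ e ∧ H.connectedComponentMk v = K) → e ∈ p.edges)

/-- The connected component `K` of `H` is a path with an odd number of edges. -/
def CompIsOddPath {V : Type*} (H : SimpleGraph V) (K : H.ConnectedComponent) : Prop :=
  ∃ (a b : V) (p : H.Walk a b), p.IsPath ∧ Odd p.length ∧
    (∀ v : V, H.connectedComponentMk v = K → v ∈ p.support) ∧
    (∀ e ∈ H.edgeSet, (∃ v, v ∈ e ∧ H.connectedComponentMk v = K) → e ∈ p.edges)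

/-- The connected component `K` of `H` is a cycle. -/
def CompIsCycle {V : Type*} (H : SimpleGraph V) (K : H.ConnectedComponent) : Prop :=
  ∃ (a : V) (p : H.Walk a a), p.IsCycle ∧
    (∀ v : V, H.connectedComponentMk v = K → v ∈ p.support) ∧
    (∀ e ∈ H.edgeSet, (∃ v, v ∈ e ∧ H.connectedComponentMk v = K) → e ∈ p.edges)

section Aux

open SimpleGraph Walk Finset

variable {V : Type*}

/-- In a path, any two edges containing the start vertex are equal. -/
lemma path_start_edge_unique {H : SimpleGraph V} {a b : V} {p : H.Walk a b}
    (hp : p.IsPath) {e1 e2 : Sym2 V} (h1 : e1 ∈ p.edges) (h2 : e2 ∈ p.edges)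
    (ha1 : a ∈ e1) (ha2 : a ∈ e2) : e1 = e2 := by
  cases p with
  | nil => simp at h1
  | cons h q =>
    have hq : ∀ e ∈ q.edges, a ∉ e := by
      intro e he hae
      obtain ⟨y, rfl⟩ := Sym2.mem_iff_exists.mp hae
      exact ((Walk.cons_isPath_iff _ _).mp hp).2 (q.fst_mem_support_of_mem_edges he)
    rw [Walk.edges_cons, List.mem_cons] at h1 h2
    rcases h1 with rfl | h1
    · rcases h2 with rfl | h2
      · rfl
      · exact absurd ha2 (hq _ h2)
    · exact absurd ha1 (hq _ h1)

/-- Any vertex on a cycle is contained in two distinct edges of the cycle. -/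
lemma cycle_two_edges [DecidableEq V] {H : SimpleGraph V} {v w : V} {c : H.Walk v v} (hc : c.IsCycle)
    (hw : w ∈ c.support) :
    ∃ e1 e2 : Sym2 V, e1 ∈ c.edges ∧ e2 ∈ c.edges ∧ e1 ≠ e2 ∧ w ∈ e1 ∧ w ∈ e2 := by
  have hc' : (c.rotate w hw).IsCycle := hc.rotate hw
  have hperm : ∀ g : Sym2 V, g ∈ (c.rotate w hw).edges ↔ g ∈ c.edges :=
    fun g => (c.rotate_edges w hw).perm.mem_iff
  set c' : H.Walk w w := c.rotate w hw with hc'def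
  clear_value c'
  suffices h : ∃ e1 e2 : Sym2 V, e1 ∈ c'.edges ∧ e2 ∈ c'.edges ∧ e1 ≠ e2 ∧ w ∈ e1 ∧ w ∈ e2 by
    obtain ⟨e1, e2, m1, m2, hne, w1, w2⟩ := h
    exact ⟨e1, e2, (hperm e1).mp m1, (hperm e2).mp m2, hne, w1, w2⟩
  clear hperm hc hw hc'def
  obtain ⟨x, hadj, q, rfl⟩ := Walk.not_nil_iff.mp hc'.not_nil
  have hq2 : 0 < q.length := by
    have h3 := hc'.three_le_length
    simp only [Walk.length_cons] at h3
    omega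
  have hqnil : ¬ q.Nil := Walk.not_nil_iff_lt_length.mpr hq2
  have hrnil : ¬ q.reverse.Nil := by
    rw [Walk.not_nil_iff_lt_length, Walk.length_reverse]; exact hq2
  obtain ⟨y, hadj2, r, hqr⟩ := Walk.not_nil_iff.mp hrnil
  have he2 : s(w, y) ∈ q.edges := by
    have : s(w, y) ∈ q.reverse.edges := by rw [hqr]; simp
    rwa [Walk.edges_reverse, List.mem_reverse] at this
  have hnodup : (Walk.cons hadj q).edges.Nodup := hc'.isTrail.edges_nodup
  rw [Walk.edges_cons, List.nodup_cons] at hnodup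
  refine ⟨s(w, x), s(w, y), by simp, by simp [he2], ?_, by simp, by simp⟩
  intro heq
  exact hnodup.1 (heq ▸ he2)

/-- The edges of a cycle cannot all lie on a path. -/
lemma cycle_not_in_path [DecidableEq V] {H : SimpleGraph V} {v : V} {c : H.Walk v v} (hc : c.IsCycle) :
    ∀ {a b : V} (p : H.Walk a b), p.IsPath → ¬ (∀ e ∈ c.edges, e ∈ p.edges) := by
  intro a b p
  induction p with
  | nil =>
    intro _ hsub
    obtain ⟨x, hadj, q, rfl⟩ := Walk.not_nil_iff.mp hc.not_nil
    exact absurd (hsub s(v, x) (by simp)) (by simp)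
  | @cons a a' b h q ih =>
    intro hp hsub
    by_cases hmem : a ∈ c.support
    · obtain ⟨e1, e2, m1, m2, hne, w1, w2⟩ := cycle_two_edges hc hmem
      exact hne (path_start_edge_unique hp (hsub _ m1) (hsub _ m2) w1 w2)
    · refine ih hp.of_cons (fun e he => ?_)
      have hnot : a ∉ e := by
        intro hae
        obtain ⟨y, rfl⟩ := Sym2.mem_iff_exists.mp hae
        exact hmem (c.fst_mem_support_of_mem_edges he)
      have := hsub e he
      rw [Walk.edges_cons, List.mem_cons] at this
      rcases this with rfl | h'
      · exact absurd (by simp : a ∈ s(a, a')) hnot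
      · exact h'

/-- In a finite acyclic graph, if every endpoint of an edge lies in two distinct
edges, then there are no edges at all. -/
lemma no_edge_of_acyclic_two [DecidableEq V] {H : SimpleGraph V} [Fintype V] (hac : H.IsAcyclic)
    (hdeg : ∀ v : V, (∃ e ∈ H.edgeSet, v ∈ e) →
      ∃ e1 e2 : Sym2 V, e1 ∈ H.edgeSet ∧ e2 ∈ H.edgeSet ∧ e1 ≠ e2 ∧ v ∈ e1 ∧ v ∈ e2)
    {e0 : Sym2 V} (he0 : e0 ∈ H.edgeSet) : False := by
  have key : ∀ (k : ℕ) (a b : V) (p : H.Walk a b), p.IsPath → ¬ p.Nil →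
      Fintype.card V < p.support.length + k → False := by
    intro k
    induction k with
    | zero =>
      intro a b p hp _ hlen
      have := hp.support_nodup.length_le_card
      omega
    | succ k ihk =>
      intro a b p hp hnil hlen
      obtain ⟨x, hadj, q, rfl⟩ := Walk.not_nil_iff.mp hnil
      have hf0 : s(a, x) ∈ (Walk.cons hadj q).edges := by simp
      have haf0 : a ∈ s(a, x) := by simp
      obtain ⟨e1, e2, m1, m2, hne, w1, w2⟩ := hdeg a
        ⟨s(a, x), (Walk.cons hadj q).edges_subset_edgeSet hf0, haf0⟩
      -- pick the one different from the first edge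
      obtain ⟨e, me, hee, we⟩ : ∃ e, e ∈ H.edgeSet ∧ e ≠ s(a, x) ∧ a ∈ e := by
        by_cases h1 : e1 = s(a, x)
        · exact ⟨e2, m2, by rw [← h1]; exact hne.symm, w2⟩
        · exact ⟨e1, m1, h1, w1⟩
      have henp : e ∉ (Walk.cons hadj q).edges := by
        intro hmem
        exact hee (path_start_edge_unique hp hmem hf0 we haf0)
      obtain ⟨w, rfl⟩ := Sym2.mem_iff_exists.mp we
      have hadj2 : H.Adj a w := H.mem_edgeSet.mp me
      by_cases hws : w ∈ (Walk.cons hadj q).support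
      · -- cycle
        have hq' : ((Walk.cons hadj q).takeUntil w hws).IsPath := hp.takeUntil hws
        have hcyc := SimpleGraph.Path.cons_isCycle ⟨(Walk.cons hadj q).takeUntil w hws, hq'⟩ hadj2.symm (by
          intro hmem
          apply henp
          have := (Walk.cons hadj q).edges_takeUntil_subset hws
          have h2 := this hmem
          rwa [Sym2.eq_swap] at h2)
        exact hac _ hcyc
      · have hp' : (Walk.cons hadj2.symm (Walk.cons hadj q)).IsPath := hp.cons hws
        refine ihk _ _ _ hp' (by simp) ?_
        simp only [Walk.support_cons, List.length_cons] at hlen ⊢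
        omega
  revert he0
  induction e0 using Sym2.ind with | _ x y => ?_
  intro he0
  have hadj : H.Adj x y := H.mem_edgeSet.mp he0
  have hp : (Walk.cons hadj .nil).IsPath := by
    simp [Walk.cons_isPath_iff, hadj.ne]
  exact key (Fintype.card V + 1) x y _ hp (by simp) (by simp; omega)

/-- If all edge-containing components are paths, the graph is acyclic. -/
lemma acyclic_of_paths [DecidableEq V] {H : SimpleGraph V}
    (hpaths : ∀ K : H.ConnectedComponent, CompHasEdge H K → CompIsPath H K) :
    H.IsAcyclic := by
  intro v c hc
  obtain ⟨x, hadj, q, hcq⟩ := Walk.not_nil_iff.mp hc.not_nil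
  obtain ⟨a, b, p, hp, hsupp, hedge⟩ :=
    hpaths (H.connectedComponentMk v) ⟨v, x, hadj, rfl⟩
  refine cycle_not_in_path hc p hp (fun e he => ?_)
  refine hedge e (c.edges_subset_edgeSet he) ?_
  induction e using Sym2.ind with
  | _ x' y' =>
    refine ⟨x', by simp, ?_⟩
    have hxs : x' ∈ c.support := c.fst_mem_support_of_mem_edges he
    exact SimpleGraph.ConnectedComponent.sound ⟨(c.takeUntil x' hxs).reverse⟩

lemma isAcyclic_mono {H H' : SimpleGraph V} (hle : H' ≤ H) (hac : H.IsAcyclic) :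
    H'.IsAcyclic := fun _ c hc => hac (c.mapLe hle) (hc.mapLe hle)

variable [DecidableEq V]

/-- The endpoints of an element of `Sym2 V` as a `Finset`. -/
def efin (e : Sym2 V) : Finset V :=
  Sym2.lift ⟨fun x y => {x, y}, fun x y => Finset.pair_comm x y⟩ e

@[simp] lemma mem_efin {v : V} {e : Sym2 V} : v ∈ efin e ↔ v ∈ e := by
  induction e using Sym2.ind with
  | _ x y => simp [efin, Sym2.mem_iff]

lemma card_efin {e : Sym2 V} (he : ¬ e.IsDiag) : (efin e).card = 2 := by
  induction e using Sym2.ind with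
  | _ x y =>
    have hxy : x ≠ y := by simpa using he
    simp [efin, Finset.card_insert_of_notMem, hxy]

lemma card_biUnion_efin {G : SimpleGraph V} {M : Finset (Sym2 V)}
    (hsub : ↑M ⊆ G.edgeSet)
    (hdisj : ∀ e ∈ M, ∀ f ∈ M, e ≠ f → ∀ v : V, v ∈ e → v ∉ f) :
    (M.biUnion efin).card = 2 * M.card := by
  rw [Finset.card_biUnion]
  · rw [Finset.sum_congr rfl (fun e he =>
      card_efin (G.not_isDiag_of_mem_edgeSet (hsub he)))]
    simp [Nat.mul_comm]
  · intro e he f hf hne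
    rw [Function.onFun, Finset.disjoint_left]
    intro v hv hv'
    exact hdisj e he f hf hne v (mem_efin.mp hv) (mem_efin.mp hv')

end Aux

section Aux2

open SimpleGraph Walk Finset

variable {V : Type*} [DecidableEq V]

lemma key_cover {G : SimpleGraph V} {M1 M2 : Finset (Sym2 V)}
    (h1 : IsMatchingSet G M1) (h2 : IsMatchingSet G M2) (hcard : M1.card = M2.card)
    (hall : ∀ f ∈ M2 \ M1, ∀ v ∈ f, ∃ e ∈ M1, v ∈ e) :
    ∀ e ∈ M1 \ M2, ∀ v ∈ e, ∃ f ∈ M2 \ M1, v ∈ f := by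
  classical
  set A := M1 \ M2 with hA
  set B := M2 \ M1 with hB
  have hAsub : A ⊆ M1 := Finset.sdiff_subset
  have hBsub : B ⊆ M2 := Finset.sdiff_subset
  -- covering edges of B-endpoints lie in A
  have hall' : ∀ f ∈ B, ∀ v ∈ f, ∃ e ∈ A, v ∈ e := by
    intro f hf v hv
    obtain ⟨e, he, hve⟩ := hall f hf v hv
    refine ⟨e, ?_, hve⟩
    rw [hA, Finset.mem_sdiff]
    refine ⟨he, fun heM2 => ?_⟩
    have hfB := hf
    rw [hB, Finset.mem_sdiff] at hfB
    have hneq : e ≠ f := fun h => hfB.2 (h ▸ he)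
    exact h2.2 e heM2 f hfB.1 hneq v hve hv
  have hcardAB : A.card = B.card := Finset.card_sdiff_comm hcard
  set N := B.biUnion efin with hN
  set P := A.biUnion efin with hP
  have hNP : N ⊆ P := by
    intro v hv
    rw [hN, Finset.mem_biUnion] at hv
    obtain ⟨f, hf, hvf⟩ := hv
    obtain ⟨e, he, hve⟩ := hall' f hf v (mem_efin.mp hvf)
    rw [hP, Finset.mem_biUnion]
    exact ⟨e, he, mem_efin.mpr hve⟩
  have hcardN : N.card = 2 * B.card :=
    card_biUnion_efin (fun e he => h2.1 (hBsub he))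
      (fun e he f hf hne => h2.2 e (hBsub he) f (hBsub hf) hne)
  have hcardP : P.card = 2 * A.card :=
    card_biUnion_efin (fun e he => h1.1 (hAsub he))
      (fun e he f hf hne => h1.2 e (hAsub he) f (hAsub hf) hne)
  have hNPeq : N = P :=
    Finset.eq_of_subset_of_card_le hNP (by omega)
  intro e he v hv
  have hvP : v ∈ P := by
    rw [hP, Finset.mem_biUnion]; exact ⟨e, he, mem_efin.mpr hv⟩
  rw [← hNPeq, hN, Finset.mem_biUnion] at hvP
  obtain ⟨f, hf, hvf⟩ := hvP
  exact ⟨f, hf, mem_efin.mp hvf⟩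

lemma mem_symmDiff_finset {M1 M2 : Finset (Sym2 V)} {e : Sym2 V} :
    e ∈ symmDiff M1 M2 ↔ (e ∈ M1 ∧ e ∉ M2) ∨ (e ∈ M2 ∧ e ∉ M1) :=
  Finset.mem_symmDiff

lemma step_lemma {G : SimpleGraph V} [Fintype V] {M1 M2 : Finset (Sym2 V)}
    (h1 : IsMatchingSet G M1) (h2 : IsMatchingSet G M2) (hcard : M1.card = M2.card)
    (hac : (sdGraph M1 M2).IsAcyclic) (hne : M1 ≠ M2) :
    ∃ e f : Sym2 V, e ∈ M1 \ M2 ∧ f ∈ M2 \ M1 ∧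
      IsMatchingSet G (insert f (M1.erase e)) := by
  classical
  set H := sdGraph M1 M2 with hH
  have hedgeH : ∀ g : Sym2 V, g ∈ symmDiff M1 M2 → g ∈ H.edgeSet := by
    intro g hg
    have hgG : g ∈ G.edgeSet := by
      rcases mem_symmDiff_finset.mp hg with ⟨h, _⟩ | ⟨h, _⟩
      · exact h1.1 h
      · exact h2.1 h
    rw [hH, sdGraph, SimpleGraph.edgeSet_fromEdgeSet]
    exact ⟨Finset.mem_coe.mpr hg, G.not_isDiag_of_mem_edgeSet hgG⟩
  have hBne : (M2 \ M1).Nonempty := by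
    rw [Finset.sdiff_nonempty]
    intro hsub
    exact hne (Finset.eq_of_subset_of_card_le hsub (le_of_eq hcard)).symm
  have hAne : (M1 \ M2).Nonempty := by
    rw [← Finset.card_pos, Finset.card_sdiff_comm hcard, Finset.card_pos]
    exact hBne
  -- there is an edge f ∈ M2 \ M1 with an M1-uncovered endpoint
  have hgood : ∃ f ∈ M2 \ M1, ∃ x y : V, f = s(x, y) ∧ ¬ ∃ e ∈ M1, y ∈ e := by
    by_contra hbad
    push_neg at hbad
    have hall : ∀ f ∈ M2 \ M1, ∀ v ∈ f, ∃ e ∈ M1, v ∈ e := by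
      intro f hf v hv
      obtain ⟨y, hfy⟩ := Sym2.mem_iff_exists.mp hv
      exact hbad f hf y v (hfy.trans (Sym2.eq_swap))
    have hall2 := key_cover h1 h2 hcard hall
    -- covering edges of B lie in A
    have hall1 : ∀ f ∈ M2 \ M1, ∀ v ∈ f, ∃ e ∈ M1 \ M2, v ∈ e := by
      intro f hf v hv
      obtain ⟨e, he, hve⟩ := hall f hf v hv
      refine ⟨e, Finset.mem_sdiff.mpr ⟨he, fun heM2 => ?_⟩, hve⟩
      have hfB := Finset.mem_sdiff.mp hf
      have hneq : e ≠ f := fun h => hfB.2 (h ▸ he)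
      exact h2.2 e heM2 f hfB.1 hneq v hve hv
    obtain ⟨f0, hf0⟩ := hBne
    refine no_edge_of_acyclic_two hac ?_
      (hedgeH f0 (mem_symmDiff_finset.mpr (Or.inr (Finset.mem_sdiff.mp hf0)))) -- fix later
    intro v hv
    obtain ⟨g, hgH, hvg⟩ := hv
    have hgsd : g ∈ symmDiff M1 M2 := by
      rw [hH, sdGraph, SimpleGraph.edgeSet_fromEdgeSet] at hgH
      exact Finset.mem_coe.mp hgH.1
    rcases mem_symmDiff_finset.mp hgsd with ⟨hgM1, hgnM2⟩ | ⟨hgM2, hgnM1⟩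
    · -- g ∈ A : get a B-edge at v
      obtain ⟨f, hf, hvf⟩ := hall2 g (Finset.mem_sdiff.mpr ⟨hgM1, hgnM2⟩) v hvg
      refine ⟨g, f, hgH, hedgeH f (mem_symmDiff_finset.mpr (Or.inr (Finset.mem_sdiff.mp hf))), ?_, hvg, hvf⟩
      intro hgf
      exact (Finset.mem_sdiff.mp hf).2 (hgf ▸ hgM1)
    · obtain ⟨e, he, hve⟩ := hall1 g (Finset.mem_sdiff.mpr ⟨hgM2, hgnM1⟩) v hvg
      refine ⟨g, e, hgH, hedgeH e (mem_symmDiff_finset.mpr (Or.inl (Finset.mem_sdiff.mp he))), ?_, hvg, hve⟩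
      intro hge
      exact hgnM1 (hge ▸ (Finset.mem_sdiff.mp he).1)
  obtain ⟨f, hf, x, y, rfl, hyunc⟩ := hgood
  have hfB := Finset.mem_sdiff.mp hf
  by_cases hx : ∃ e ∈ M1, x ∈ e
  · obtain ⟨e, heM1, hxe⟩ := hx
    have heA : e ∈ M1 \ M2 := by
      refine Finset.mem_sdiff.mpr ⟨heM1, fun heM2 => ?_⟩
      have hneq : e ≠ s(x, y) := fun h => hfB.2 (h ▸ heM1)
      exact h2.2 e heM2 _ hfB.1 hneq x hxe (by simp)
    refine ⟨e, s(x, y), heA, hf, ?_⟩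
    constructor
    · intro g hg
      rcases Finset.mem_insert.mp hg with rfl | hg
      · exact h2.1 hfB.1
      · exact h1.1 (Finset.mem_of_mem_erase hg)
    · have hfree : ∀ g ∈ M1.erase e, ∀ v : V, v ∈ (s(x, y) : Sym2 V) → v ∉ g := by
        intro g hg v hvf hvg
        rcases Sym2.mem_iff.mp hvf with rfl | rfl
        · exact (Finset.ne_of_mem_erase hg)
            (h1.2 g (Finset.mem_of_mem_erase hg) e heM1
              (fun h => (Finset.ne_of_mem_erase hg) h) v hvg |>.elim hxe)
        · exact hyunc ⟨g, Finset.mem_of_mem_erase hg, hvg⟩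
      intro g hg g' hg' hne' v hvg hvg'
      rcases Finset.mem_insert.mp hg with rfl | hg <;>
        rcases Finset.mem_insert.mp hg' with rfl | hg'
      · exact absurd rfl hne'
      · exact hfree g' hg' v hvg hvg'
      · exact hfree g hg v hvg' hvg
      · exact h1.2 g (Finset.mem_of_mem_erase hg) g' (Finset.mem_of_mem_erase hg')
          hne' v hvg hvg'
  · obtain ⟨e, heA⟩ := hAne
    refine ⟨e, s(x, y), heA, hf, ?_⟩
    constructor
    · intro g hg
      rcases Finset.mem_insert.mp hg with rfl | hg
      · exact h2.1 hfB.1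
      · exact h1.1 (Finset.mem_of_mem_erase hg)
    · have hfree : ∀ g ∈ M1.erase e, ∀ v : V, v ∈ (s(x, y) : Sym2 V) → v ∉ g := by
        intro g hg v hvf hvg
        rcases Sym2.mem_iff.mp hvf with rfl | rfl
        · exact hx ⟨g, Finset.mem_of_mem_erase hg, hvg⟩
        · exact hyunc ⟨g, Finset.mem_of_mem_erase hg, hvg⟩
      intro g hg g' hg' hne' v hvg hvg'
      rcases Finset.mem_insert.mp hg with rfl | hg <;>
        rcases Finset.mem_insert.mp hg' with rfl | hg'
      · exact absurd rfl hne'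
      · exact hfree g' hg' v hvg hvg'
      · exact hfree g hg v hvg' hvg
      · exact h1.2 g (Finset.mem_of_mem_erase hg) g' (Finset.mem_of_mem_erase hg')
          hne' v hvg hvg'

end Aux2

section Aux3

open SimpleGraph Finset

variable {V : Type*} [DecidableEq V]

lemma symmDiff_insert_erase {M1 M2 : Finset (Sym2 V)} {e f : Sym2 V}
    (he : e ∈ M1 \ M2) (hf : f ∈ M2 \ M1) :
    symmDiff (insert f (M1.erase e)) M2 = ((symmDiff M1 M2).erase e).erase f := by
  obtain ⟨heM1, heM2⟩ := Finset.mem_sdiff.mp he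
  obtain ⟨hfM2, hfM1⟩ := Finset.mem_sdiff.mp hf
  ext g
  simp only [Finset.mem_symmDiff, Finset.mem_erase, Finset.mem_insert]
  by_cases hgf : g = f
  · subst hgf; simp_all
  · by_cases hge : g = e
    · subst hge; simp_all
    · simp_all

lemma symmDiff_self_insert_erase {M1 : Finset (Sym2 V)} {e f : Sym2 V}
    (he : e ∈ M1) (hf : f ∉ M1) :
    symmDiff M1 (insert f (M1.erase e)) = {e, f} := by
  ext g
  simp only [Finset.mem_symmDiff, Finset.mem_erase, Finset.mem_insert]
  by_cases hgf : g = f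
  · subst hgf; simp_all
  · by_cases hge : g = e
    · subst hge; simp_all
    · simp_all

lemma symmDiff_card_even {M1 M2 : Finset (Sym2 V)} (hcard : M1.card = M2.card) :
    (symmDiff M1 M2).card = 2 * (M1 \ M2).card := by
  have hd : Disjoint (M1 \ M2) (M2 \ M1) := disjoint_sdiff_sdiff
  have : symmDiff M1 M2 = (M1 \ M2) ∪ (M2 \ M1) := by
    ext g; simp [Finset.mem_symmDiff, Finset.mem_union, Finset.mem_sdiff]
  rw [this, Finset.card_union_of_disjoint hd, Finset.card_sdiff_comm hcard]
  omega

lemma reconf_ub {G : SimpleGraph V} [Fintype V] {M2 : Finset (Sym2 V)}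
    (h2 : IsMatchingSet G M2) :
    ∀ (n : ℕ) (M1 : Finset (Sym2 V)), IsMatchingSet G M1 → M1.card = M2.card →
      (sdGraph M1 M2).IsAcyclic → (symmDiff M1 M2).card = 2 * n →
      ∃ seq, IsReconfSeq G M1 M2 n seq := by
  intro n
  induction n with
  | zero =>
    intro M1 hm1 _ _ hcount
    have : symmDiff M1 M2 = ∅ := Finset.card_eq_zero.mp (by omega)
    have hMeq : M1 = M2 := by
      rwa [← Finset.bot_eq_empty, symmDiff_eq_bot] at this
    exact ⟨fun _ => M1, rfl, hMeq ▸ rfl, fun i _ => hm1, fun i hi => absurd hi (by omega)⟩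
  | succ n ih =>
    intro M1 hm1 hc hac hcount
    have hne : M1 ≠ M2 := by
      intro h; rw [h, symmDiff_self] at hcount
      simp [Finset.bot_eq_empty] at hcount
    obtain ⟨e, f, he, hf, hm'⟩ := step_lemma hm1 h2 hc hac hne
    obtain ⟨heM1, heM2⟩ := Finset.mem_sdiff.mp he
    obtain ⟨hfM2, hfM1⟩ := Finset.mem_sdiff.mp hf
    have hef : e ≠ f := fun h => heM2 (h ▸ hfM2)
    set M1' := insert f (M1.erase e) with hM1'
    have hcard' : M1'.card = M2.card := by
      rw [hM1', Finset.card_insert_of_notMem (fun h => hfM1 (Finset.mem_of_mem_erase h)),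
        Finset.card_erase_of_mem heM1]
      have : 1 ≤ M1.card := Finset.card_pos.mpr ⟨e, heM1⟩
      omega
    have hsd : symmDiff M1' M2 = ((symmDiff M1 M2).erase e).erase f :=
      symmDiff_insert_erase he hf
    have hesd : e ∈ symmDiff M1 M2 := Finset.mem_symmDiff.mpr (Or.inl ⟨heM1, heM2⟩)
    have hfsd : f ∈ (symmDiff M1 M2).erase e := Finset.mem_erase.mpr
      ⟨hef.symm, Finset.mem_symmDiff.mpr (Or.inr ⟨hfM2, hfM1⟩)⟩
    have hcount' : (symmDiff M1' M2).card = 2 * n := by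
      rw [hsd, Finset.card_erase_of_mem hfsd, Finset.card_erase_of_mem hesd]
      omega
    have hsub : symmDiff M1' M2 ⊆ symmDiff M1 M2 := by
      rw [hsd]
      exact (Finset.erase_subset _ _).trans (Finset.erase_subset _ _)
    have hle : sdGraph M1' M2 ≤ sdGraph M1 M2 := by
      apply SimpleGraph.fromEdgeSet_mono
      exact_mod_cast hsub
    have hac' : (sdGraph M1' M2).IsAcyclic := isAcyclic_mono hle hac
    obtain ⟨seq', h0', hl', hmatch', hstep'⟩ := ih M1' hm' hcard' hac' hcount'
    refine ⟨fun i => if i = 0 then M1 else seq' (i - 1), by simp, ?_, ?_, ?_⟩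
    · simp only [Nat.succ_ne_zero, if_false]
      exact hl'
    · intro i hi
      by_cases hi0 : i = 0
      · simp [hi0, hm1]
      · simp only [hi0, if_false]
        exact hmatch' (i - 1) (by omega)
    · intro i hi
      by_cases hi0 : i = 0
      · subst hi0
        norm_num
        rw [h0', hM1', symmDiff_self_insert_erase heM1 hfM1]
        exact Finset.card_pair hef
      · simp only [hi0, if_false, Nat.add_eq_zero, and_false, Nat.one_ne_zero]
        have : i - 1 + 1 = i := by omega
        have hs := hstep' (i - 1) (by omega)
        rw [this] at hs
        simpa using hs

lemma reconf_lb {G : SimpleGraph V} {M1 M2 : Finset (Sym2 V)} {ℓ : ℕ}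
    {seq : ℕ → Finset (Sym2 V)} (h : IsReconfSeq G M1 M2 ℓ seq) :
    (symmDiff M1 M2).card ≤ 2 * ℓ := by
  obtain ⟨h0, hl, _, hstep⟩ := h
  have key : ∀ i, i ≤ ℓ → (symmDiff M1 (seq i)).card ≤ 2 * i := by
    intro i
    induction i with
    | zero => intro _; simp [h0, symmDiff_self, Finset.bot_eq_empty]
    | succ i ihi =>
      intro hi
      have tri : symmDiff M1 (seq (i + 1)) ⊆
          symmDiff M1 (seq i) ∪ symmDiff (seq i) (seq (i + 1)) := by
        have := symmDiff_triangle M1 (seq i) (seq (i + 1))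
        simpa [Finset.sup_eq_union] using this
      calc (symmDiff M1 (seq (i + 1))).card
          ≤ (symmDiff M1 (seq i) ∪ symmDiff (seq i) (seq (i + 1))).card :=
            Finset.card_le_card tri
        _ ≤ (symmDiff M1 (seq i)).card + (symmDiff (seq i) (seq (i + 1))).card :=
            Finset.card_union_le _ _
        _ ≤ 2 * i + 2 := by
            have := hstep i (by omega)
            have hih := ihi (by omega)
            omega
        _ = 2 * (i + 1) := by ring
  have := key ℓ le_rfl
  rwa [hl] at this

end Aux3

/-- If every connected component of `(V, M1 △ M2)` containing at least one edge
is a path, then `dist(M1, M2) = |M1 △ M2| / 2`. -/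
theorem statement1 {V : Type*} [Fintype V] [DecidableEq V] (G : SimpleGraph V)
    (M1 M2 : Finset (Sym2 V)) (h1 : IsMatchingSet G M1) (h2 : IsMatchingSet G M2)
    (hcard : M1.card = M2.card)
    (hpaths : ∀ K : (sdGraph M1 M2).ConnectedComponent,
      CompHasEdge (sdGraph M1 M2) K → CompIsPath (sdGraph M1 M2) K) :
    reconfDist G M1 M2 = (((symmDiff M1 M2).card / 2 : ℕ) : ℕ∞) := by
  classical
  have hac := acyclic_of_paths hpaths
  have heven := symmDiff_card_even (M1 := M1) (M2 := M2) hcard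
  have hdiv : (symmDiff M1 M2).card / 2 = (M1 \ M2).card := by
    rw [heven]; exact Nat.mul_div_cancel_left _ two_pos
  obtain ⟨seq, hseq⟩ := reconf_ub h2 ((symmDiff M1 M2).card / 2) M1 h1 hcard hac
    (by rw [hdiv]; exact heven)
  apply le_antisymm
  · exact sInf_le ⟨(symmDiff M1 M2).card / 2, rfl, seq, hseq⟩
  · apply le_sInf
    rintro d ⟨ℓ, rfl, seq', hs⟩
    have hlb := reconf_lb hs
    have hle : (symmDiff M1 M2).card / 2 ≤ ℓ := by rw [hdiv]; omega
    exact_mod_cast Nat.cast_le.mpr hle
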